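/- Let E = F(√a₁, √a₂) be a biquadratic extension of F with Galois group G generated by σ₁, σ₂ as above, with intermediate fields E₁ = F(√a₁), E₂ = F(√a₂), E₃ = F(√(a₁a₂)). Then {e ∈ E^× : N_{E/E₃}(e) ∈ F^×} = ⟨E₁^×, E₂^×⟩, the subgroup of E^× generated by E₁^× and E₂^×; that is, e·σ₁σ₂(e) ∈ F^× if and only if e is a product of nonzero elements of E₁ and E₂. -/

import Mathlib

section
variable {F E : Type*} [Field F] [Field E] [Algebra F E]

lemma quad_repr (a : F) (s : E) (hs : s ^ 2 = algebraMap F E a) (x : E)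
    (hx : x ∈ Algebra.adjoin F ({s} : Set E)) :
    ∃ c₀ c₁ : F, x = algebraMap F E c₀ + algebraMap F E c₁ * s := by
  induction hx using Algebra.adjoin_induction with
  | mem y hy =>
    rcases hy with rfl
    exact ⟨0, 1, by simp⟩
  | algebraMap r => exact ⟨r, 0, by simp⟩
  | add x y hx hy ihx ihy =>
    obtain ⟨c₀, c₁, rfl⟩ := ihx
    obtain ⟨d₀, d₁, rfl⟩ := ihy
    exact ⟨c₀ + d₀, c₁ + d₁, by simp only [map_add]; ring⟩
  | mul x y hx hy ihx ihy =>
    obtain ⟨c₀, c₁, rfl⟩ := ihx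
    obtain ⟨d₀, d₁, rfl⟩ := ihy
    refine ⟨c₀ * d₀ + a * c₁ * d₁, c₀ * d₁ + c₁ * d₀, ?_⟩
    simp only [map_add, map_mul]
    linear_combination (algebraMap F E c₁ * algebraMap F E d₁) * hs

lemma biquad_repr (a₁ a₂ : F) (s₁ s₂ : E)
    (hs₁ : s₁ ^ 2 = algebraMap F E a₁) (hs₂ : s₂ ^ 2 = algebraMap F E a₂) (x : E)
    (hx : x ∈ Algebra.adjoin F ({s₁, s₂} : Set E)) :
    ∃ c₀ c₁ c₂ c₃ : F, x = algebraMap F E c₀ + algebraMap F E c₁ * s₁ +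
      algebraMap F E c₂ * s₂ + algebraMap F E c₃ * (s₁ * s₂) := by
  induction hx using Algebra.adjoin_induction with
  | mem y hy =>
    rcases hy with rfl | rfl
    · exact ⟨0, 1, 0, 0, by simp⟩
    · exact ⟨0, 0, 1, 0, by simp⟩
  | algebraMap r => exact ⟨r, 0, 0, 0, by simp⟩
  | add x y hx hy ihx ihy =>
    obtain ⟨c₀, c₁, c₂, c₃, rfl⟩ := ihx
    obtain ⟨d₀, d₁, d₂, d₃, rfl⟩ := ihy
    exact ⟨c₀ + d₀, c₁ + d₁, c₂ + d₂, c₃ + d₃, by simp only [map_add]; ring⟩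
  | mul x y hx hy ihx ihy =>
    obtain ⟨c₀, c₁, c₂, c₃, rfl⟩ := ihx
    obtain ⟨d₀, d₁, d₂, d₃, rfl⟩ := ihy
    refine ⟨c₀ * d₀ + a₁ * c₁ * d₁ + a₂ * c₂ * d₂ + a₁ * a₂ * c₃ * d₃,
      c₀ * d₁ + c₁ * d₀ + a₂ * (c₂ * d₃ + c₃ * d₂),
      c₀ * d₂ + c₂ * d₀ + a₁ * (c₁ * d₃ + c₃ * d₁),
      c₀ * d₃ + c₃ * d₀ + c₁ * d₂ + c₂ * d₁, ?_⟩
    simp only [map_add, map_mul]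
    linear_combination (algebraMap F E c₁ * algebraMap F E d₁ +
        (algebraMap F E c₁ * algebraMap F E d₃ + algebraMap F E c₃ * algebraMap F E d₁) * s₂ +
        algebraMap F E c₃ * algebraMap F E d₃ * s₂ ^ 2) * hs₁ +
      (algebraMap F E c₂ * algebraMap F E d₂ +
        (algebraMap F E c₂ * algebraMap F E d₃ + algebraMap F E c₃ * algebraMap F E d₂) * s₁ +
        algebraMap F E c₃ * algebraMap F E d₃ * algebraMap F E a₁) * hs₂

end

/-- For a biquadratic extension `E = F(√a₁, √a₂)` with intermediate fields
`E₁ = F(√a₁)`, `E₂ = F(√a₂)`, `E₃ = F(√(a₁a₂))`, one has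
`{e ∈ E^× : N_{E/E₃}(e) ∈ F^×} = ⟨E₁^×, E₂^×⟩`, the subgroup of `E^×`
generated by `E₁^×` and `E₂^×`. -/
theorem biquadratic_norm_in_F_eq_subgroup
    (F E : Type*) [Field F] [Field E] [Algebra F E]
    (hchar : (2 : F) ≠ 0)
    (a₁ a₂ : F) (ha₁ : ¬ IsSquare a₁) (ha₂ : ¬ IsSquare a₂)
    (ha₁₂ : ¬ IsSquare (a₁ * a₂))
    (s₁ s₂ : E)
    (hs₁ : s₁ ^ 2 = algebraMap F E a₁) (hs₂ : s₂ ^ 2 = algebraMap F E a₂)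
    (htop : Algebra.adjoin F ({s₁, s₂} : Set E) = ⊤)
    (σ₁ σ₂ : E ≃ₐ[F] E)
    (hσ₁₁ : σ₁ s₁ = s₁) (hσ₁₂ : σ₁ s₂ = -s₂)
    (hσ₂₁ : σ₂ s₁ = -s₁) (hσ₂₂ : σ₂ s₂ = s₂) :
    ∀ e : Eˣ,
      ((∃ f : F, f ≠ 0 ∧ algebraMap F E f = (e : E) * σ₁ (σ₂ (e : E))) ↔
        e ∈ Subgroup.closure {x : Eˣ | (x : E) ∈ Algebra.adjoin F ({s₁} : Set E) ∨
          (x : E) ∈ Algebra.adjoin F ({s₂} : Set E)}) := by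
  set A := algebraMap F E with hA
  have hAinj : Function.Injective A := (algebraMap F E).injective
  set τ : E ≃ₐ[F] E := σ₂.trans σ₁ with hτdef
  have hτ : ∀ x : E, σ₁ (σ₂ x) = τ x := fun x => rfl
  have hτ₁ : τ s₁ = -s₁ := by
    show σ₁ (σ₂ s₁) = -s₁
    rw [hσ₂₁, map_neg, hσ₁₁]
  have hτ₂ : τ s₂ = -s₂ := by
    show σ₁ (σ₂ s₂) = -s₂
    rw [hσ₂₂, hσ₁₂]
  -- independence of {1, s₁s₂}
  have ht2 : (s₁ * s₂) ^ 2 = A (a₁ * a₂) := by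
    rw [map_mul, mul_pow, hs₁, hs₂]
  have hindep : ∀ x y : F, A x + A y * (s₁ * s₂) = 0 → y = 0 := by
    intro x y h
    by_contra hy
    have hst : s₁ * s₂ = A (-x / y) := by
      have hAy : A y ≠ 0 := fun h0 => hy (hAinj (by rwa [map_zero]))
      rw [map_div₀, map_neg, eq_div_iff hAy]
      linear_combination h
    exact ha₁₂ ⟨-x / y, by
      have h2 := ht2
      rw [hst, ← map_pow] at h2
      have h3 := hAinj h2
      rw [← h3]; ring⟩
  -- the key norm computation
  have hnorm : ∀ c₀ c₁ c₂ c₃ : F,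
      (A c₀ + A c₁ * s₁ + A c₂ * s₂ + A c₃ * (s₁ * s₂)) *
        τ (A c₀ + A c₁ * s₁ + A c₂ * s₂ + A c₃ * (s₁ * s₂)) =
      A (c₀ ^ 2 - a₁ * c₁ ^ 2 - a₂ * c₂ ^ 2 + a₁ * a₂ * c₃ ^ 2) +
        A (2 * (c₀ * c₃ - c₁ * c₂)) * (s₁ * s₂) := by
    intro c₀ c₁ c₂ c₃
    have hτe : τ (A c₀ + A c₁ * s₁ + A c₂ * s₂ + A c₃ * (s₁ * s₂)) =
        A c₀ - A c₁ * s₁ - A c₂ * s₂ + A c₃ * (s₁ * s₂) := by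
      simp only [map_add, map_mul, AlgEquiv.commutes, hτ₁, hτ₂, hA]
      ring
    rw [hτe]
    simp only [map_add, map_mul, map_sub, map_pow, map_ofNat, hA]
    push_cast
    linear_combination (-(algebraMap F E c₁) ^ 2 + (algebraMap F E c₃) ^ 2 * s₂ ^ 2) * hs₁ +
      (-(algebraMap F E c₂) ^ 2 + (algebraMap F E c₃) ^ 2 * algebraMap F E a₁) * hs₂
  intro e
  constructor
  · -- hard direction
    rintro ⟨f, hf0, hf⟩
    obtain ⟨c₀, c₁, c₂, c₃, he⟩ := biquad_repr a₁ a₂ s₁ s₂ hs₁ hs₂ (e : E)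
      (htop ▸ Algebra.mem_top)
    rw [hτ, he, hnorm] at hf
    -- deduce c₀ c₃ = c₁ c₂
    have hkey : c₀ * c₃ = c₁ * c₂ := by
      have h0 : A (c₀ ^ 2 - a₁ * c₁ ^ 2 - a₂ * c₂ ^ 2 + a₁ * a₂ * c₃ ^ 2 - f) +
          A (2 * (c₀ * c₃ - c₁ * c₂)) * (s₁ * s₂) = 0 := by
        rw [map_sub]; linear_combination -hf
      have := hindep _ _ h0
      have h2 : (2 : F) * (c₀ * c₃ - c₁ * c₂) = 0 := hAinj (by rw [this, map_zero])
      exact sub_eq_zero.mp ((mul_eq_zero.mp h2).resolve_left hchar)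
    have hkeyE : A c₀ * A c₃ = A c₁ * A c₂ := by rw [← map_mul, ← map_mul, hkey]
    have hene : (e : E) ≠ 0 := e.ne_zero
    have hs₁mem : s₁ ∈ Algebra.adjoin F ({s₁} : Set E) :=
      Algebra.subset_adjoin rfl
    have hs₂mem : s₂ ∈ Algebra.adjoin F ({s₂} : Set E) :=
      Algebra.subset_adjoin rfl
    -- factorization helper
    have hfactor : ∀ x y : E, (e : E) = x * y →
        (x ∈ Algebra.adjoin F ({s₁} : Set E) ∨ x ∈ Algebra.adjoin F ({s₂} : Set E)) →
        (y ∈ Algebra.adjoin F ({s₁} : Set E) ∨ y ∈ Algebra.adjoin F ({s₂} : Set E)) →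
        e ∈ Subgroup.closure {x : Eˣ | (x : E) ∈ Algebra.adjoin F ({s₁} : Set E) ∨
          (x : E) ∈ Algebra.adjoin F ({s₂} : Set E)} := by
      intro x y hxy hx hy
      have hx0 : x ≠ 0 := by
        rintro rfl; exact hene (by rw [hxy, zero_mul])
      have hy0 : y ≠ 0 := by
        rintro rfl; exact hene (by rw [hxy, mul_zero])
      have : e = Units.mk0 x hx0 * Units.mk0 y hy0 := Units.ext (by simpa using hxy)
      rw [this]
      exact mul_mem (Subgroup.subset_closure (by simpa using hx))
        (Subgroup.subset_closure (by simpa using hy))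
    by_cases hc₀ : c₀ = 0
    · have hc12 : c₁ * c₂ = 0 := by rw [← hkey, hc₀, zero_mul]
      rcases mul_eq_zero.mp hc12 with hc₁ | hc₂
      · refine hfactor (A c₂ + A c₃ * s₁) s₂ ?_ (Or.inl ?_) (Or.inr hs₂mem)
        · rw [he, hc₀, hc₁]; simp only [map_zero]; ring
        · exact add_mem (Subalgebra.algebraMap_mem _ _)
            (mul_mem (Subalgebra.algebraMap_mem _ _) hs₁mem)
      · refine hfactor s₁ (A c₁ + A c₃ * s₂) ?_ (Or.inl hs₁mem) (Or.inr ?_)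
        · rw [he, hc₀, hc₂]; simp only [map_zero]; ring
        · exact add_mem (Subalgebra.algebraMap_mem _ _)
            (mul_mem (Subalgebra.algebraMap_mem _ _) hs₂mem)
    · refine hfactor (A c₀⁻¹ * (A c₀ + A c₁ * s₁)) (A c₀ + A c₂ * s₂) ?_
        (Or.inl ?_) (Or.inr ?_)
      · have hAc₀ : A c₀ ≠ 0 := fun h => hc₀ (hAinj (by rwa [map_zero]))
        rw [he, map_inv₀]
        field_simp
        linear_combination (s₁ * s₂) * hkeyE
      · exact mul_mem (Subalgebra.algebraMap_mem _ _)
          (add_mem (Subalgebra.algebraMap_mem _ _)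
            (mul_mem (Subalgebra.algebraMap_mem _ _) hs₁mem))
      · exact add_mem (Subalgebra.algebraMap_mem _ _)
          (mul_mem (Subalgebra.algebraMap_mem _ _) hs₂mem)
  · -- easy direction: the norm condition defines a subgroup containing the generators
    intro hmem
    have hτ0 : ∀ x : E, x ≠ 0 → τ x ≠ 0 := by
      intro x hx h0
      exact hx (by simpa using τ.injective (h0.trans (map_zero τ).symm))
    let H : Subgroup Eˣ :=
      { carrier := {u : Eˣ | ∃ f : F, f ≠ 0 ∧ A f = (u : E) * τ (u : E)}
        one_mem' := ⟨1, one_ne_zero, by simp⟩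
        mul_mem' := by
          rintro u v ⟨f, hf0, hf⟩ ⟨g, hg0, hg⟩
          refine ⟨f * g, mul_ne_zero hf0 hg0, ?_⟩
          rw [map_mul, hf, hg]
          push_cast
          rw [map_mul]
          ring
        inv_mem' := by
          rintro u ⟨f, hf0, hf⟩
          refine ⟨f⁻¹, inv_ne_zero hf0, ?_⟩
          rw [map_inv₀, hf]
          push_cast
          rw [map_inv₀, mul_inv] }
    have hSsub : {x : Eˣ | (x : E) ∈ Algebra.adjoin F ({s₁} : Set E) ∨
        (x : E) ∈ Algebra.adjoin F ({s₂} : Set E)} ⊆ (H : Set Eˣ) := by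
      rintro u (hu | hu)
      · obtain ⟨c₀, c₁, hrep⟩ := quad_repr a₁ s₁ hs₁ _ hu
        have hcomp : A (c₀ ^ 2 - a₁ * c₁ ^ 2) = (u : E) * τ (u : E) := by
          rw [hrep]
          have hτu : τ (A c₀ + A c₁ * s₁) = A c₀ - A c₁ * s₁ := by
            simp only [map_add, map_mul, AlgEquiv.commutes, hτ₁, hA]
            ring
          rw [hτu]
          simp only [map_sub, map_mul, map_pow, hA]
          linear_combination ((algebraMap F E c₁) ^ 2) * hs₁
        have hne : (u : E) * τ (u : E) ≠ 0 :=
          mul_ne_zero u.ne_zero (hτ0 _ u.ne_zero)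
        exact ⟨c₀ ^ 2 - a₁ * c₁ ^ 2,
          fun h => hne (by rw [← hcomp, h, map_zero]), hcomp⟩
      · obtain ⟨c₀, c₂, hrep⟩ := quad_repr a₂ s₂ hs₂ _ hu
        have hcomp : A (c₀ ^ 2 - a₂ * c₂ ^ 2) = (u : E) * τ (u : E) := by
          rw [hrep]
          have hτu : τ (A c₀ + A c₂ * s₂) = A c₀ - A c₂ * s₂ := by
            simp only [map_add, map_mul, AlgEquiv.commutes, hτ₂, hA]
            ring
          rw [hτu]
          simp only [map_sub, map_mul, map_pow, hA]
          linear_combination ((algebraMap F E c₂) ^ 2) * hs₂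
        have hne : (u : E) * τ (u : E) ≠ 0 :=
          mul_ne_zero u.ne_zero (hτ0 _ u.ne_zero)
        exact ⟨c₀ ^ 2 - a₂ * c₂ ^ 2,
          fun h => hne (by rw [← hcomp, h, map_zero]), hcomp⟩
    obtain ⟨f, hf0, hf⟩ := (Subgroup.closure_le H).mpr hSsub hmem
    exact ⟨f, hf0, by rw [hτ]; exact hf⟩
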